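/- Let t = e + ℓ, n ≥ ℓ-2 + (ℓ-1)²·2^{2t}·(q-1)^{2t-1}, let C ⊆ Z_q^n be an e-error-correcting code, and Y a set of at least V_q(n, ℓ-1) + 1 distinct words such that every y ∈ Y is within Hamming distance t of both c1 and c2, where c1, c2 ∈ C. Then d(c1, c2) ≤ 2e + 2. -/

import Mathlib

open Finset

lemma choose_mono_half (n : ℕ) : ∀ j i, i ≤ j → 2 * j ≤ n → n.choose i ≤ n.choose j := by
  intro j
  induction j with
  | zero => intro i hi _; interval_cases i; rfl
  | succ k ih =>
    intro i hi hj
    rcases Nat.eq_or_lt_of_le hi with h | h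
    · subst h; rfl
    · exact (ih i (by omega) (by omega)).trans
        (Nat.choose_le_succ_of_lt_half_left (by omega))

lemma card_exact {n q : ℕ} (c : Fin n → Fin q) (K : Finset (Fin n)) :
    (univ.filter fun z : Fin n → Fin q => ∀ i, z i ≠ c i ↔ i ∈ K).card ≤ (q - 1) ^ K.card := by
  induction K using Finset.induction_on with
  | empty =>
    simp only [Finset.card_empty, pow_zero]
    apply Finset.card_le_one.mpr
    intro a ha b hb
    simp only [mem_filter, Finset.notMem_empty, iff_false, not_not] at ha hb
    funext i; rw [ha.2 i, hb.2 i]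
  | insert _ _ ha _ =>
    rename_i a K ih
    have hinj : (univ.filter fun z : Fin n → Fin q => ∀ i, z i ≠ c i ↔ i ∈ insert a K).card ≤
        ((univ.erase (c a)) ×ˢ (univ.filter fun z : Fin n → Fin q => ∀ i, z i ≠ c i ↔ i ∈ K)).card := by
      apply Finset.card_le_card_of_injOn (fun z => (z a, Function.update z a (c a)))
      · intro z hz
        simp only [Finset.mem_coe, mem_filter, mem_univ, true_and] at hz
        simp only [Finset.mem_coe, Finset.mem_product, Finset.mem_erase, mem_univ, and_true, true_and, mem_filter]
        refine ⟨(hz a).mpr (mem_insert_self a K), ?_⟩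
        intro i
        by_cases hia : i = a
        · subst hia; simp [Function.update_self, ha]
        · rw [Function.update_of_ne hia]
          rw [hz i, Finset.mem_insert]
          tauto
      · intro z hz w hw hzw
        simp only [Prod.mk.injEq] at hzw
        funext i
        by_cases hia : i = a
        · subst hia; exact hzw.1
        · have := congrFun hzw.2 i
          rwa [Function.update_of_ne hia, Function.update_of_ne hia] at this
    refine hinj.trans ?_
    rw [Finset.card_product, Finset.card_erase_of_mem (mem_univ _), Finset.card_univ,
      Fintype.card_fin, Finset.card_insert_of_notMem ha, pow_succ]
    rw [mul_comm ((q-1)^K.card) (q-1)]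
    exact Nat.mul_le_mul_left _ ih

lemma sum_powerset_filter {α : Type*} [DecidableEq α] (S : Finset α) (r w : ℕ) :
    ∑ K ∈ S.powerset.filter (fun K => K.card ≤ r), w ^ K.card
      ≤ ∑ i ∈ Finset.range (r + 1), w ^ i * S.card.choose i := by
  have h : S.powerset.filter (fun K => K.card ≤ r)
      = (Finset.range (r + 1)).biUnion (fun i => S.powersetCard i) := by
    ext K
    simp only [mem_filter, mem_powerset, Finset.mem_biUnion, Finset.mem_range,
      Finset.mem_powersetCard]
    constructor
    · rintro ⟨h1, h2⟩; exact ⟨K.card, by omega, h1, rfl⟩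
    · rintro ⟨i, hi, h1, h2⟩; exact ⟨h1, by omega⟩
  rw [h, Finset.sum_biUnion]
  · apply Finset.sum_le_sum
    intro i _
    have : ∑ K ∈ S.powersetCard i, w ^ K.card = ∑ K ∈ S.powersetCard i, w ^ i := by
      apply Finset.sum_congr rfl
      intro K hK
      rw [(Finset.mem_powersetCard.mp hK).2]
    rw [this, Finset.sum_const, Finset.card_powersetCard, smul_eq_mul, mul_comm]
  · intro i _ j _ hij
    apply Finset.disjoint_left.mpr
    intro K hKi hKj
    exact hij ((Finset.mem_powersetCard.mp hKi).2.symm.trans (Finset.mem_powersetCard.mp hKj).2)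

lemma ball_card {n q : ℕ} (c : Fin n → Fin q) (S : Finset (Fin n)) (r : ℕ) :
    (univ.filter fun z : Fin n → Fin q => hammingDist c z ≤ r ∧ ∀ i, i ∉ S → z i = c i).card
      ≤ ∑ i ∈ Finset.range (r + 1), (q - 1) ^ i * S.card.choose i := by
  have hsub : (univ.filter fun z : Fin n → Fin q => hammingDist c z ≤ r ∧ ∀ i, i ∉ S → z i = c i)
      ⊆ (S.powerset.filter (fun K => K.card ≤ r)).biUnion
        (fun K => univ.filter fun z : Fin n → Fin q => ∀ i, z i ≠ c i ↔ i ∈ K) := by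
    intro z hz
    simp only [mem_filter, mem_univ, true_and] at hz
    rw [Finset.mem_biUnion]
    refine ⟨univ.filter (fun i => z i ≠ c i), ?_, ?_⟩
    · simp only [mem_filter, mem_powerset]
      constructor
      · intro i hi
        simp only [mem_filter, mem_univ, true_and] at hi
        by_contra hiS
        exact hi (hz.2 i hiS)
      · refine le_trans (le_of_eq ?_) hz.1
        unfold hammingDist
        congr 1
        apply Finset.filter_congr
        intro i _
        exact ne_comm
    · simp only [mem_filter, mem_univ, true_and]
      intro i; simp
  calc _ ≤ _ := Finset.card_le_card hsub
    _ ≤ ∑ K ∈ S.powerset.filter (fun K => K.card ≤ r),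
        (univ.filter fun z : Fin n → Fin q => ∀ i, z i ≠ c i ↔ i ∈ K).card :=
      Finset.card_biUnion_le
    _ ≤ ∑ K ∈ S.powerset.filter (fun K => K.card ≤ r), (q - 1) ^ K.card :=
      Finset.sum_le_sum fun K _ => card_exact c K
    _ ≤ _ := sum_powerset_filter S r (q - 1)

/-- Lemma "Listasanat lähellä": with `t = e + ℓ`, `n ≥ ℓ-2 + (ℓ-1)²·2^{2t}·(q-1)^{2t-1}`,
`C` an `e`-error-correcting code, and `Y` a set of at least `V_q(n,ℓ-1)+1` distinct words each
within distance `t` of both `c1, c2 ∈ C`, we have `d(c1,c2) ≤ 2e+2`. -/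
theorem stmt11 (q n e ℓ t : ℕ) (ht : t = e + ℓ) (hq : 2 ≤ q) (hl : 1 ≤ ℓ)
    (hn : ℓ - 2 + (ℓ - 1) ^ 2 * 2 ^ (2 * t) * (q - 1) ^ (2 * t - 1) ≤ n)
    (C : Finset (Fin n → Fin q))
    (hC : ∀ c1 ∈ C, ∀ c2 ∈ C, c1 ≠ c2 → 2 * e + 1 ≤ hammingDist c1 c2)
    (Y : Finset (Fin n → Fin q))
    (hY : (∑ i ∈ Finset.range ℓ, (q - 1) ^ i * n.choose i) + 1 ≤ Y.card)
    (c1 : Fin n → Fin q) (c2 : Fin n → Fin q) (hc1 : c1 ∈ C) (hc2 : c2 ∈ C)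
    (h1 : ∀ y ∈ Y, hammingDist c1 y ≤ t) (h2 : ∀ y ∈ Y, hammingDist c2 y ≤ t) :
    hammingDist c1 c2 ≤ 2 * e + 2 := by
  by_contra hcon
  push_neg at hcon
  have hd : 2 * e + 3 ≤ hammingDist c1 c2 := hcon
  obtain ⟨y0, hy0⟩ : ∃ y, y ∈ Y := by
    have : 0 < Y.card := by omega
    exact Finset.card_pos.mp this |>.imp fun _ h => h
  have hd2t : hammingDist c1 c2 ≤ 2 * t := by
    calc hammingDist c1 c2 ≤ hammingDist c1 y0 + hammingDist y0 c2 := hammingDist_triangle _ _ _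
      _ ≤ t + t := add_le_add (h1 y0 hy0) (by rw [hammingDist_comm]; exact h2 y0 hy0)
      _ = 2 * t := by ring
  have hl2 : 2 ≤ ℓ := by omega
  set D : Finset (Fin n) := univ.filter (fun i => c1 i ≠ c2 i) with hDdef
  have hDcard : D.card = hammingDist c1 c2 := rfl
  have split : ∀ c y : Fin n → Fin q, hammingDist c y
      = (D.filter fun i => c i ≠ y i).card + (Dᶜ.filter fun i => c i ≠ y i).card := by
    intro c y
    have hu : (univ : Finset (Fin n)) = D ∪ Dᶜ := (Finset.union_compl D).symm
    unfold hammingDist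
    rw [show (Finset.filter (fun i => c i ≠ y i) univ)
        = (D ∪ Dᶜ).filter (fun i => c i ≠ y i) by rw [← hu]]
    rw [Finset.filter_union]
    exact Finset.card_union_of_disjoint
      (Finset.disjoint_filter_filter disjoint_compl_right)
  have hm : ∀ y ∈ Y, (Dᶜ.filter fun i => c1 i ≠ y i).card ≤ ℓ - 2 := by
    intro y hy
    have e1 := split c1 y
    have e2 := split c2 y
    have heq : Dᶜ.filter (fun i => c2 i ≠ y i) = Dᶜ.filter (fun i => c1 i ≠ y i) := by
      apply Finset.filter_congr
      intro i hi
      have : c1 i = c2 i := by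
        have := Finset.mem_compl.mp hi
        simp only [hDdef, mem_filter, mem_univ, true_and, not_not] at this
        exact this
      rw [this]
    have hsubD : D ⊆ (D.filter fun i => c1 i ≠ y i) ∪ (D.filter fun i => c2 i ≠ y i) := by
      intro i hi
      have hne : c1 i ≠ c2 i := by
        simpa only [hDdef, mem_filter, mem_univ, true_and] using hi
      by_cases h : c1 i ≠ y i
      · exact Finset.mem_union_left _ (mem_filter.mpr ⟨hi, h⟩)
      · push_neg at h
        exact Finset.mem_union_right _ (mem_filter.mpr ⟨hi, by rw [← h]; exact fun hh => hne hh.symm⟩)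
    have hcard := (Finset.card_le_card hsubD).trans (Finset.card_union_le _ _)
    have ha := h1 y hy
    have hb := h2 y hy
    rw [heq] at e2
    omega
  set Z1 : Finset (Fin n → Fin q) :=
    univ.filter (fun z => hammingDist c1 z ≤ t ∧ ∀ i, i ∉ D → z i = c1 i) with hZ1def
  set Z2 : Finset (Fin n → Fin q) :=
    univ.filter (fun z => hammingDist c1 z ≤ ℓ - 2 ∧ ∀ i, i ∉ Dᶜ → z i = c1 i) with hZ2def
  have hYZ : Y.card ≤ Z1.card * Z2.card := by
    rw [← Finset.card_product]
    apply Finset.card_le_card_of_injOn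
      (fun y => ((fun i => if i ∈ D then y i else c1 i), (fun i => if i ∈ D then c1 i else y i)))
    · intro y hy
      rw [Finset.mem_coe, Finset.mem_product]
      constructor
      · simp only [hZ1def, mem_filter, mem_univ, true_and]
        refine ⟨?_, fun i hi => if_neg hi⟩
        refine le_trans ?_ (h1 y hy)
        unfold hammingDist
        apply Finset.card_le_card
        intro i hi
        simp only [mem_filter, mem_univ, true_and] at hi ⊢
        by_cases hiD : i ∈ D
        · rwa [if_pos hiD] at hi
        · rw [if_neg hiD] at hi; exact absurd rfl hi
      · simp only [hZ2def, mem_filter, mem_univ, true_and]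
        constructor
        · refine le_trans ?_ (hm y hy)
          unfold hammingDist
          apply Finset.card_le_card
          intro i hi
          simp only [mem_filter, mem_univ, true_and] at hi
          by_cases hiD : i ∈ D
          · rw [if_pos hiD] at hi; exact absurd rfl hi
          · rw [if_neg hiD] at hi
            exact mem_filter.mpr ⟨Finset.mem_compl.mpr hiD, hi⟩
        · intro i hi
          have : i ∈ D := by
            by_contra h
            exact hi (Finset.mem_compl.mpr h)
          exact if_pos this
    · intro y hy w hw hzw
      simp only [Prod.mk.injEq] at hzw
      funext i
      by_cases hiD : i ∈ D
      · have := congrFun hzw.1 i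
        rwa [if_pos hiD, if_pos hiD] at this
      · have := congrFun hzw.2 i
        rwa [if_neg hiD, if_neg hiD] at this
  have hZ1 : Z1.card ≤ ∑ i ∈ Finset.range (t + 1), (q - 1) ^ i * (hammingDist c1 c2).choose i := by
    have := ball_card c1 D t
    rwa [hDcard] at this
  have hZ2 : Z2.card ≤ ∑ i ∈ Finset.range (ℓ - 1), (q - 1) ^ i * n.choose i := by
    have hr : ℓ - 2 + 1 = ℓ - 1 := by omega
    have hbc := ball_card c1 Dᶜ (ℓ - 2)
    rw [hr] at hbc
    refine hbc.trans (Finset.sum_le_sum ?_)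
    intro i _
    refine Nat.mul_le_mul_left _ (Nat.choose_le_choose i ?_)
    calc Dᶜ.card ≤ (univ : Finset (Fin n)).card := Finset.card_le_univ _
      _ = n := by simp
  have hq1 : 1 ≤ q - 1 := by omega
  have hA : (∑ i ∈ Finset.range (t + 1), (q - 1) ^ i * (hammingDist c1 c2).choose i)
      ≤ 2 ^ (2 * t) * (q - 1) ^ (2 * t - 1) := by
    calc (∑ i ∈ Finset.range (t + 1), (q - 1) ^ i * (hammingDist c1 c2).choose i)
        ≤ ∑ i ∈ Finset.range (t + 1), (q - 1) ^ (2 * t - 1) * (2 * t).choose i := by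
          apply Finset.sum_le_sum
          intro i hi
          have hi' : i ≤ t := by
            have := Finset.mem_range.mp hi; omega
          exact Nat.mul_le_mul (Nat.pow_le_pow_right hq1 (by omega))
            (Nat.choose_le_choose i hd2t)
      _ ≤ ∑ i ∈ Finset.range (2 * t + 1), (q - 1) ^ (2 * t - 1) * (2 * t).choose i := by
          apply Finset.sum_le_sum_of_subset
          apply Finset.range_subset_range.mpr
          omega
      _ = (q - 1) ^ (2 * t - 1) * 2 ^ (2 * t) := by
          rw [← Finset.mul_sum, Nat.sum_range_choose]
      _ = 2 ^ (2 * t) * (q - 1) ^ (2 * t - 1) := mul_comm _ _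
  have hn2 : 2 * (ℓ - 2) ≤ n := by
    have h1' : 1 ≤ 2 ^ (2 * t) := Nat.one_le_two_pow
    have h2' : 1 ≤ (q - 1) ^ (2 * t - 1) := Nat.one_le_pow _ _ (by omega)
    have h3' : (ℓ - 1) ^ 2 ≤ (ℓ - 1) ^ 2 * 2 ^ (2 * t) * (q - 1) ^ (2 * t - 1) := by
      calc (ℓ - 1) ^ 2 = (ℓ - 1) ^ 2 * 1 * 1 := by ring
        _ ≤ _ := Nat.mul_le_mul (Nat.mul_le_mul_left _ h1') h2'
    have h4' : ℓ - 1 ≤ (ℓ - 1) ^ 2 := by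
      rw [pow_two]
      exact Nat.le_mul_of_pos_left _ (by omega)
    omega
  have hB : (∑ i ∈ Finset.range (ℓ - 1), (q - 1) ^ i * n.choose i)
      ≤ (ℓ - 1) * ((q - 1) ^ (ℓ - 2) * n.choose (ℓ - 2)) := by
    have hle : ∀ i ∈ Finset.range (ℓ - 1),
        (q - 1) ^ i * n.choose i ≤ (q - 1) ^ (ℓ - 2) * n.choose (ℓ - 2) := by
      intro i hi
      have hi' : i ≤ ℓ - 2 := by
        have := Finset.mem_range.mp hi; omega
      exact Nat.mul_le_mul (Nat.pow_le_pow_right hq1 hi')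
        (choose_mono_half n (ℓ - 2) i hi' hn2)
    have hstep := Finset.sum_le_card_nsmul (Finset.range (ℓ - 1))
      (fun i => (q - 1) ^ i * n.choose i) ((q - 1) ^ (ℓ - 2) * n.choose (ℓ - 2)) hle
    simpa only [Finset.card_range, smul_eq_mul] using hstep
  have hprod : 2 ^ (2 * t) * (q - 1) ^ (2 * t - 1)
      * ((ℓ - 1) * ((q - 1) ^ (ℓ - 2) * n.choose (ℓ - 2)))
      ≤ (q - 1) ^ (ℓ - 1) * n.choose (ℓ - 1) := by
    set X := 2 ^ (2 * t) * (q - 1) ^ (2 * t - 1) with hX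
    have hkey : (ℓ - 1) * ((ℓ - 1) * X) ≤ n - (ℓ - 2) := by
      have h3 : (ℓ - 1) ^ 2 * 2 ^ (2 * t) * (q - 1) ^ (2 * t - 1)
          = (ℓ - 1) * ((ℓ - 1) * X) := by rw [hX]; ring
      omega
    have hid : n.choose (ℓ - 1) * (ℓ - 1) = n.choose (ℓ - 2) * (n - (ℓ - 2)) := by
      have h := Nat.choose_succ_right_eq n (ℓ - 2)
      have hr : ℓ - 2 + 1 = ℓ - 1 := by omega
      rwa [hr] at h
    have hpow : (q - 1) ^ (ℓ - 2) ≤ (q - 1) ^ (ℓ - 1) := Nat.pow_le_pow_right hq1 (by omega)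
    have hlpos : 0 < ℓ - 1 := by omega
    apply Nat.le_of_mul_le_mul_left _ hlpos
    calc (ℓ - 1) * (X * ((ℓ - 1) * ((q - 1) ^ (ℓ - 2) * n.choose (ℓ - 2))))
        = (q - 1) ^ (ℓ - 2) * n.choose (ℓ - 2) * ((ℓ - 1) * ((ℓ - 1) * X)) := by ring
      _ ≤ (q - 1) ^ (ℓ - 2) * n.choose (ℓ - 2) * (n - (ℓ - 2)) := Nat.mul_le_mul_left _ hkey
      _ ≤ (q - 1) ^ (ℓ - 1) * n.choose (ℓ - 2) * (n - (ℓ - 2)) :=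
          Nat.mul_le_mul_right _ (Nat.mul_le_mul_right _ hpow)
      _ = (q - 1) ^ (ℓ - 1) * (n.choose (ℓ - 2) * (n - (ℓ - 2))) := by ring
      _ = (q - 1) ^ (ℓ - 1) * (n.choose (ℓ - 1) * (ℓ - 1)) := by rw [hid]
      _ = (ℓ - 1) * ((q - 1) ^ (ℓ - 1) * n.choose (ℓ - 1)) := by ring
  have htop : (q - 1) ^ (ℓ - 1) * n.choose (ℓ - 1)
      ≤ ∑ i ∈ Finset.range ℓ, (q - 1) ^ i * n.choose i :=
    Finset.single_le_sum (f := fun i => (q - 1) ^ i * n.choose i)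
      (fun i _ => Nat.zero_le _) (Finset.mem_range.mpr (by omega))
  have hfinal : Y.card ≤ ∑ i ∈ Finset.range ℓ, (q - 1) ^ i * n.choose i := by
    calc Y.card ≤ Z1.card * Z2.card := hYZ
      _ ≤ (∑ i ∈ Finset.range (t + 1), (q - 1) ^ i * (hammingDist c1 c2).choose i)
          * (∑ i ∈ Finset.range (ℓ - 1), (q - 1) ^ i * n.choose i) := Nat.mul_le_mul hZ1 hZ2
      _ ≤ (2 ^ (2 * t) * (q - 1) ^ (2 * t - 1))
          * ((ℓ - 1) * ((q - 1) ^ (ℓ - 2) * n.choose (ℓ - 2))) := Nat.mul_le_mul hA hB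
      _ ≤ (q - 1) ^ (ℓ - 1) * n.choose (ℓ - 1) := hprod
      _ ≤ _ := htop
  omega
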